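/- Let z ∈ ℂ₊ and let (φ, φ̃) be an admissible solution at z. Set ζ(f) = σ²(𝛄(−·)⋆φ)(f) and ζ̃(f) = σ²(𝛄⋆φ̃)(f), write S(f) = S(f,z), S̃(f) = S̃(f,z), and define K₁₁(f,u) = σ²𝛄(u−f)·T⁻¹ tr[S(f)(𝐀𝐀*)(f)S(f)*]/|1+ζ(f)|², K₁₂(f,u) = σ²𝛄(f−u)·T⁻¹ tr[S(f)S(f)*], K₂₁(f,u) = σ²𝛄(u−f)·|z|² T⁻¹ tr[S̃(f)S̃(f)*], K₂₂(f,u) = σ²𝛄(f−u)·T⁻¹ tr[S̃(f)(𝐀*𝐀)(f)S̃(f)*]/|1+ζ̃(f)|², F₁(f) = T⁻¹ tr[S(f)S(f)*], and F₂(f) = T⁻¹ tr[S̃(f)(𝐀*𝐀)(f)S̃(f)*]/|1+ζ̃(f)|². Then for every f ∈ [0,1]: Im φ(f) = ∫₀¹ ( K₁₁(f,u) Im φ(u) + K₁₂(f,u) Im(z φ̃(u)) ) du + (Im z) F₁(f), and Im(z φ̃(f)) = ∫₀¹ ( K₂₁(f,u) Im φ(u) + K₂₂(f,u) Im(z φ̃(u))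 ) du + (Im z) F₂(f). -/

import Mathlib

open MeasureTheory Matrix

noncomputable section

/-- Spectral norm (l2 operator norm) of a complex matrix. -/
def specNorm {m n : Type*} [Fintype m] [Fintype n] [DecidableEq n]
    (M : Matrix m n ℂ) : ℝ :=
  ‖(Matrix.toEuclideanLin.trans LinearMap.toContinuousLinearMap) M‖

/-- The Fourier transform `𝐀(f) = ∑_{k=-L}^{L} e^{2πikf} A(k)`. -/
def fA (N T : ℕ) (L : ℕ) (A : ℤ → Matrix (Fin N) (Fin T) ℂ) (f : ℝ) :
    Matrix (Fin N) (Fin T) ℂ :=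
  ∑ k ∈ Finset.Icc (-(L:ℤ)) (L:ℤ),
    Complex.exp (2 * Real.pi * Complex.I * (k : ℂ) * (f : ℂ)) • A k

/-- `(𝛄 ⋆ ψ)(f) = ∫₀¹ 𝛄(f-u) ψ(u) du`. -/
def convP (bγ : ℝ → ℝ) (ψ : ℝ → ℂ) (f : ℝ) : ℂ :=
  ∫ u in (0:ℝ)..1, (bγ (f - u) : ℂ) * ψ u

/-- `(𝛄(-·) ⋆ ψ)(f) = ∫₀¹ 𝛄(u-f) ψ(u) du`. -/
def convM (bγ : ℝ → ℝ) (ψ : ℝ → ℂ) (f : ℝ) : ℂ :=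
  ∫ u in (0:ℝ)..1, (bγ (u - f) : ℂ) * ψ u

/-- The matrix `S(f,z)`. -/
def Smat (N T L : ℕ) (σ2 : ℝ) (bγ : ℝ → ℝ) (A : ℤ → Matrix (Fin N) (Fin T) ℂ)
    (φ φt : ℝ → ℂ) (z : ℂ) (f : ℝ) : Matrix (Fin N) (Fin N) ℂ :=
  ((-z * (1 + (σ2 : ℂ) * convP bγ φt f)) • (1 : Matrix (Fin N) (Fin N) ℂ)
    + (1 + (σ2 : ℂ) * convM bγ φ f)⁻¹ • (fA N T L A f * (fA N T L A f)ᴴ))⁻¹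

/-- The matrix `S̃(f,z)`. -/
def StMat (N T L : ℕ) (σ2 : ℝ) (bγ : ℝ → ℝ) (A : ℤ → Matrix (Fin N) (Fin T) ℂ)
    (φ φt : ℝ → ℂ) (z : ℂ) (f : ℝ) : Matrix (Fin T) (Fin T) ℂ :=
  ((-z * (1 + (σ2 : ℂ) * convM bγ φ f)) • (1 : Matrix (Fin T) (Fin T) ℂ)
    + (1 + (σ2 : ℂ) * convP bγ φt f)⁻¹ • ((fA N T L A f)ᴴ * fA N T L A f))⁻¹

/-- A pair `(φ, φ̃)` of integrable functions is an admissible solution at `z`. -/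
def IsAdmissible (N T L : ℕ) (σ2 : ℝ) (bγ : ℝ → ℝ)
    (A : ℤ → Matrix (Fin N) (Fin T) ℂ) (z : ℂ) (φ φt : ℝ → ℂ) : Prop :=
  IntegrableOn φ (Set.Icc (0:ℝ) 1) ∧ IntegrableOn φt (Set.Icc (0:ℝ) 1) ∧
  (∀ f ∈ Set.Icc (0:ℝ) 1,
    0 ≤ (φ f).im ∧ 0 ≤ (φt f).im ∧ 0 ≤ (z * φ f).im ∧ 0 ≤ (z * φt f).im) ∧
  (∀ f ∈ Set.Icc (0:ℝ) 1,
    φ f = (T : ℂ)⁻¹ * (Smat N T L σ2 bγ A φ φt z f).trace ∧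
    φt f = (T : ℂ)⁻¹ * (StMat N T L σ2 bγ A φ φt z f).trace)

section Kernels

variable (N T L : ℕ) (σ2 : ℝ) (bγ : ℝ → ℝ) (A : ℤ → Matrix (Fin N) (Fin T) ℂ)
  (φ φt : ℝ → ℂ) (z : ℂ)

/-- `ζ(f) = σ²(𝛄(-·)⋆φ)(f)`. -/
def zeta (f : ℝ) : ℂ := (σ2 : ℂ) * convM bγ φ f

/-- `ζ̃(f) = σ²(𝛄⋆φ̃)(f)`. -/
def zetat (f : ℝ) : ℂ := (σ2 : ℂ) * convP bγ φt f

def K11 (f u : ℝ) : ℝ :=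
  σ2 * bγ (u - f) *
    ((T : ℝ)⁻¹ * ((Smat N T L σ2 bγ A φ φt z f * (fA N T L A f * (fA N T L A f)ᴴ)
        * (Smat N T L σ2 bγ A φ φt z f)ᴴ).trace.re)
      / ‖1 + zeta σ2 bγ φ f‖ ^ 2)

def K12 (f u : ℝ) : ℝ :=
  σ2 * bγ (f - u) *
    ((T : ℝ)⁻¹ * ((Smat N T L σ2 bγ A φ φt z f
        * (Smat N T L σ2 bγ A φ φt z f)ᴴ).trace.re))

def K21 (f u : ℝ) : ℝ :=
  σ2 * bγ (u - f) * (‖z‖ ^ 2 *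
    ((T : ℝ)⁻¹ * ((StMat N T L σ2 bγ A φ φt z f
        * (StMat N T L σ2 bγ A φ φt z f)ᴴ).trace.re)))

def K22 (f u : ℝ) : ℝ :=
  σ2 * bγ (f - u) *
    ((T : ℝ)⁻¹ * ((StMat N T L σ2 bγ A φ φt z f * ((fA N T L A f)ᴴ * fA N T L A f)
        * (StMat N T L σ2 bγ A φ φt z f)ᴴ).trace.re)
      / ‖1 + zetat σ2 bγ φt f‖ ^ 2)

def F1 (f : ℝ) : ℝ :=
  (T : ℝ)⁻¹ * ((Smat N T L σ2 bγ A φ φt z f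
      * (Smat N T L σ2 bγ A φ φt z f)ᴴ).trace.re)

def F2 (f : ℝ) : ℝ :=
  (T : ℝ)⁻¹ * ((StMat N T L σ2 bγ A φ φt z f * ((fA N T L A f)ᴴ * fA N T L A f)
      * (StMat N T L σ2 bγ A φ φt z f)ᴴ).trace.re)
    / ‖1 + zetat σ2 bγ φt f‖ ^ 2

end Kernels


set_option linter.unusedSectionVars false

namespace ImagPartsAux

open Complex MeasureTheory Matrix
open scoped ComplexOrder




variable {n m : Type*} [Fintype n] [DecidableEq n] [Fintype m]

lemma trace_im_zero {X : Matrix n n ℂ} (hX : Xᴴ = X) : X.trace.im = 0 := by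
  have h := congrArg Matrix.trace hX
  rw [Matrix.trace_conjTranspose] at h
  have h2 := congrArg Complex.im h
  simp only [Complex.star_def, Complex.conj_im] at h2
  linarith

lemma isUnit_det_aux (a b : ℂ) (ha : a.im < 0) (hb : b.im ≤ 0) (C : Matrix m n ℂ) :
    IsUnit ((a • (1 : Matrix n n ℂ) + b • (Cᴴ * C)).det) := by
  rw [isUnit_iff_ne_zero]
  intro hdet
  obtain ⟨v, hv, hMv⟩ := Matrix.exists_mulVec_eq_zero_iff.mpr hdet
  set p : ℂ := dotProduct (star v) v with hp
  set q : ℂ := dotProduct (star (C *ᵥ v)) (C *ᵥ v) with hq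
  have key : a * p + b * q = 0 := by
    have h0 : dotProduct (star v) ((a • (1 : Matrix n n ℂ) + b • (Cᴴ * C)) *ᵥ v) = 0 := by
      rw [hMv, dotProduct_zero]
    have hCC : dotProduct (star v) ((Cᴴ * C) *ᵥ v) = q := by
      rw [← Matrix.mulVec_mulVec, Matrix.dotProduct_mulVec, ← Matrix.star_mulVec]
    rw [Matrix.add_mulVec, Matrix.smul_mulVec, Matrix.smul_mulVec,
      Matrix.one_mulVec, dotProduct_add, dotProduct_smul, dotProduct_smul,
      hCC, ← hp, smul_eq_mul, smul_eq_mul] at h0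
    exact h0
  have hpv : 0 < p := Matrix.dotProduct_star_self_pos_iff.mpr hv
  have hqv : 0 ≤ q := dotProduct_star_self_nonneg _
  obtain ⟨hpre, hpim⟩ := Complex.lt_def.mp hpv
  obtain ⟨hqre, hqim⟩ := Complex.le_def.mp hqv
  simp only [Complex.zero_re, Complex.zero_im] at hpre hpim hqre hqim
  have him := congrArg Complex.im key
  simp only [Complex.add_im, Complex.mul_im, ← hpim, ← hqim, Complex.zero_im,
    mul_zero, zero_add, add_zero] at him
  nlinarith [mul_pos (neg_pos.mpr ha) hpre, mul_nonneg (neg_nonneg.mpr hb) hqre]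

lemma trace_inv_im (e a b : ℂ) (B : Matrix n n ℂ) (hB : Bᴴ = B)
    (h : IsUnit ((a • (1 : Matrix n n ℂ) + b • B).det)) :
    (e * ((a • (1 : Matrix n n ℂ) + b • B)⁻¹).trace).im
      = -(((starRingEnd ℂ) e * a).im
            * (((a • (1 : Matrix n n ℂ) + b • B)⁻¹
                * ((a • (1 : Matrix n n ℂ) + b • B)⁻¹)ᴴ).trace).re)
        - ((starRingEnd ℂ) e * b).im
            * (((a • (1 : Matrix n n ℂ) + b • B)⁻¹ * B
                * ((a • (1 : Matrix n n ℂ) + b • B)⁻¹)ᴴ).trace).re := by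
  set M : Matrix n n ℂ := a • 1 + b • B with hM
  set S : Matrix n n ℂ := M⁻¹ with hS
  have hSM : S * M = 1 := Matrix.nonsing_inv_mul M h
  have hMH : Mᴴ = (starRingEnd ℂ a) • (1 : Matrix n n ℂ) + (starRingEnd ℂ b) • B := by
    rw [hM, Matrix.conjTranspose_add, Matrix.conjTranspose_smul, Matrix.conjTranspose_smul,
      Matrix.conjTranspose_one, hB]
    rfl
  have h1 : S * Mᴴ * Sᴴ = S := by
    rw [Matrix.mul_assoc, ← Matrix.conjTranspose_mul, hSM, Matrix.conjTranspose_one,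
      Matrix.mul_one]
  have h2 : S * M * Sᴴ = Sᴴ := by rw [hSM, Matrix.one_mul]
  have key : e • S - (starRingEnd ℂ e) • Sᴴ
      = S * (e • Mᴴ - (starRingEnd ℂ e) • M) * Sᴴ := by
    rw [Matrix.mul_sub, Matrix.sub_mul, Matrix.mul_smul, Matrix.mul_smul,
      Matrix.smul_mul, Matrix.smul_mul, h1, h2]
  have hexp : S * (e • Mᴴ - (starRingEnd ℂ e) • M) * Sᴴ
      = (e * starRingEnd ℂ a - starRingEnd ℂ e * a) • (S * Sᴴ)
        + (e * starRingEnd ℂ b - starRingEnd ℂ e * b) • (S * B * Sᴴ) := by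
    have hmid : e • Mᴴ - (starRingEnd ℂ e) • M
        = (e * starRingEnd ℂ a - starRingEnd ℂ e * a) • (1 : Matrix n n ℂ)
          + (e * starRingEnd ℂ b - starRingEnd ℂ e * b) • B := by
      rw [hMH, hM, smul_add, smul_add, smul_smul, smul_smul, smul_smul, smul_smul,
        sub_smul, sub_smul]
      abel
    rw [hmid, Matrix.mul_add, Matrix.add_mul, Matrix.mul_smul, Matrix.mul_smul,
      Matrix.smul_mul, Matrix.smul_mul, Matrix.mul_one, Matrix.mul_assoc]
  have htr := congrArg Matrix.trace key
  rw [hexp, Matrix.trace_sub, Matrix.trace_smul, Matrix.trace_smul,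
    Matrix.trace_conjTranspose, Matrix.trace_add, Matrix.trace_smul, Matrix.trace_smul] at htr
  have ht1 : ((S * Sᴴ).trace).im = 0 := trace_im_zero (by
    rw [Matrix.conjTranspose_mul, Matrix.conjTranspose_conjTranspose])
  have ht2 : ((S * B * Sᴴ).trace).im = 0 := trace_im_zero (by
    rw [Matrix.conjTranspose_mul, Matrix.conjTranspose_mul,
      Matrix.conjTranspose_conjTranspose, hB, Matrix.mul_assoc])
  have him := congrArg Complex.im htr
  simp only [smul_eq_mul, Complex.sub_im, Complex.add_im, Complex.mul_im, Complex.mul_re,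
    Complex.star_def, Complex.conj_re, Complex.conj_im, ht1, ht2, mul_zero, zero_mul,
    add_zero, zero_add, neg_zero, neg_neg, neg_mul, mul_neg, sub_zero, zero_sub] at him ⊢
  linarith [him]

lemma conj_mul_inv_im (u v : ℂ) :
    ((starRingEnd ℂ) u * v⁻¹).im = -((u * v).im) / Complex.normSq v := by
  simp only [Complex.mul_im, Complex.inv_re, Complex.inv_im, Complex.conj_re, Complex.conj_im]
  ring



lemma aux_int (g : ℝ → ℝ) (hg : Continuous g) (ψ : ℝ → ℂ)
    (hψ : IntegrableOn ψ (Set.Icc (0:ℝ) 1)) :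
    IntervalIntegrable (fun u => (g u : ℂ) * ψ u) MeasureTheory.volume 0 1 := by
  have h1 : IntegrableOn (fun u => (g u : ℂ) * ψ u) (Set.Icc (0:ℝ) 1) := by
    obtain ⟨C, hC⟩ := (isCompact_Icc (a := (0:ℝ)) (b := 1)).exists_bound_of_continuousOn
      hg.continuousOn
    apply Integrable.bdd_mul (c := C) hψ
    · exact (Complex.continuous_ofReal.comp hg).aestronglyMeasurable
    · filter_upwards [ae_restrict_mem measurableSet_Icc] with x hx
      simpa using hC x hx
  apply MeasureTheory.IntegrableOn.intervalIntegrable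
  rwa [Set.uIcc_of_le zero_le_one]

lemma aux_int_re (g : ℝ → ℝ) (hg : Continuous g) (ψ : ℝ → ℝ)
    (hψ : IntegrableOn ψ (Set.Icc (0:ℝ) 1)) :
    IntervalIntegrable (fun u => g u * ψ u) MeasureTheory.volume 0 1 := by
  have h1 : IntegrableOn (fun u => g u * ψ u) (Set.Icc (0:ℝ) 1) := by
    obtain ⟨C, hC⟩ := (isCompact_Icc (a := (0:ℝ)) (b := 1)).exists_bound_of_continuousOn
      hg.continuousOn
    apply Integrable.bdd_mul (c := C) hψ
    · exact hg.aestronglyMeasurable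
    · filter_upwards [ae_restrict_mem measurableSet_Icc] with x hx
      simpa using hC x hx
  apply MeasureTheory.IntegrableOn.intervalIntegrable
  rwa [Set.uIcc_of_le zero_le_one]

lemma aux_im (g : ℝ → ℝ) (hg : Continuous g) (ψ : ℝ → ℂ)
    (hψ : IntegrableOn ψ (Set.Icc (0:ℝ) 1)) :
    (∫ u in (0:ℝ)..1, (g u : ℂ) * ψ u).im = ∫ u in (0:ℝ)..1, g u * (ψ u).im := by
  have h := (ContinuousLinearMap.intervalIntegral_comp_comm Complex.imCLM
    (aux_int g hg ψ hψ)).symm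
  simp only [Complex.imCLM_apply] at h
  rw [h]
  simp only [Complex.mul_im, Complex.ofReal_re, Complex.ofReal_im, zero_mul, add_zero]


end ImagPartsAux

set_option maxHeartbeats 2000000 in
theorem imaginary_parts_system
    (N T L : ℕ) (hN : 0 < N) (hT : 0 < T) (hL : 0 < L)
    (σ2 : ℝ) (hσ : 0 < σ2)
    (γ : ℤ → ℝ) (hγsum : Summable fun k : ℤ => |γ k|) (hγ0 : γ 0 = 1)
    (bγ : ℝ → ℝ)
    (hbγ : ∀ f : ℝ, (bγ f : ℂ)
      = ∑' k : ℤ, (γ k : ℂ) * Complex.exp (2 * Real.pi * Complex.I * (k : ℂ) * (f : ℂ)))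
    (hbγc : Continuous bγ) (hbγnn : ∀ f, 0 ≤ bγ f) (hbγper : Function.Periodic bγ 1)
    (A : ℤ → Matrix (Fin N) (Fin T) ℂ)
    (z : ℂ) (hz : 0 < z.im) (φ φt : ℝ → ℂ)
    (hadm : IsAdmissible N T L σ2 bγ A z φ φt) :
    ∀ f ∈ Set.Icc (0:ℝ) 1,
      (φ f).im =
        (∫ u in (0:ℝ)..1,
          (K11 N T L σ2 bγ A φ φt z f u * (φ u).im
            + K12 N T L σ2 bγ A φ φt z f u * (z * φt u).im))
        + z.im * F1 N T L σ2 bγ A φ φt z f ∧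
      (z * φt f).im =
        (∫ u in (0:ℝ)..1,
          (K21 N T L σ2 bγ A φ φt z f u * (φ u).im
            + K22 N T L σ2 bγ A φ φt z f u * (z * φt u).im))
        + z.im * F2 N T L σ2 bγ A φ φt z f := by
  obtain ⟨hφint, hφtint, hpos, hfix⟩ := hadm
  intro f hf
  obtain ⟨hfix1, hfix2⟩ := hfix f hf
  have hcont1 : Continuous fun u : ℝ => bγ (u - f) :=
    hbγc.comp (continuous_id.sub continuous_const)
  have hcont2 : Continuous fun u : ℝ => bγ (f - u) :=
    hbγc.comp (continuous_const.sub continuous_id)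
  have hφz : IntegrableOn (fun u => z * φ u) (Set.Icc (0:ℝ) 1) := hφint.const_mul z
  have hφtz : IntegrableOn (fun u => z * φt u) (Set.Icc (0:ℝ) 1) := hφtint.const_mul z
  have hI1 : (convM bγ φ f).im = ∫ u in (0:ℝ)..1, bγ (u - f) * (φ u).im :=
    ImagPartsAux.aux_im _ hcont1 _ hφint
  have hI2' : (convP bγ φt f).im = ∫ u in (0:ℝ)..1, bγ (f - u) * (φt u).im :=
    ImagPartsAux.aux_im _ hcont2 _ hφtint
  have hconvMz : z * convM bγ φ f = ∫ u in (0:ℝ)..1, (bγ (u - f) : ℂ) * (z * φ u) := by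
    rw [convM, ← intervalIntegral.integral_const_mul]
    apply intervalIntegral.integral_congr
    intro u _
    simp only
    ring
  have hconvPz : z * convP bγ φt f = ∫ u in (0:ℝ)..1, (bγ (f - u) : ℂ) * (z * φt u) := by
    rw [convP, ← intervalIntegral.integral_const_mul]
    apply intervalIntegral.integral_congr
    intro u _
    simp only
    ring
  have hI1z : (z * convM bγ φ f).im = ∫ u in (0:ℝ)..1, bγ (u - f) * (z * φ u).im := by
    rw [hconvMz]; exact ImagPartsAux.aux_im _ hcont1 _ hφz
  have hI2 : (z * convP bγ φt f).im = ∫ u in (0:ℝ)..1, bγ (f - u) * (z * φt u).im := by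
    rw [hconvPz]; exact ImagPartsAux.aux_im _ hcont2 _ hφtz
  have hnn1 : 0 ≤ (convM bγ φ f).im := by
    rw [hI1]
    apply intervalIntegral.integral_nonneg zero_le_one
    intro u hu
    exact mul_nonneg (hbγnn _) (hpos u hu).1
  have hnn1z : 0 ≤ (z * convM bγ φ f).im := by
    rw [hI1z]
    apply intervalIntegral.integral_nonneg zero_le_one
    intro u hu
    exact mul_nonneg (hbγnn _) (hpos u hu).2.2.1
  have hnn2' : 0 ≤ (convP bγ φt f).im := by
    rw [hI2']
    apply intervalIntegral.integral_nonneg zero_le_one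
    intro u hu
    exact mul_nonneg (hbγnn _) (hpos u hu).2.1
  have hnn2 : 0 ≤ (z * convP bγ φt f).im := by
    rw [hI2]
    apply intervalIntegral.integral_nonneg zero_le_one
    intro u hu
    exact mul_nonneg (hbγnn _) (hpos u hu).2.2.2
  set w : ℂ := 1 + (σ2:ℂ) * convM bγ φ f with hw
  set wt : ℂ := 1 + (σ2:ℂ) * convP bγ φt f with hwt
  set G := fA N T L A f with hG
  set S := Smat N T L σ2 bγ A φ φt z f with hSdef
  set St := StMat N T L σ2 bγ A φ φt z f with hStdef
  have hS : S = ((-z * wt) • (1 : Matrix (Fin N) (Fin N) ℂ) + w⁻¹ • (G * Gᴴ))⁻¹ := rfl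
  have hSt : St = ((-z * w) • (1 : Matrix (Fin T) (Fin T) ℂ) + wt⁻¹ • (Gᴴ * G))⁻¹ := rfl
  have hwim : w.im = σ2 * (convM bγ φ f).im := by
    rw [hw]
    simp [Complex.add_im, Complex.mul_im]
  have hwtim : wt.im = σ2 * (convP bγ φt f).im := by
    rw [hwt]
    simp [Complex.add_im, Complex.mul_im]
  have hzw : (z * w).im = z.im + σ2 * (z * convM bγ φ f).im := by
    have e1 : z * w = z + (σ2:ℂ) * (z * convM bγ φ f) := by rw [hw]; ring
    rw [e1]
    simp [Complex.add_im, Complex.mul_im]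
  have hzwt : (z * wt).im = z.im + σ2 * (z * convP bγ φt f).im := by
    have e1 : z * wt = z + (σ2:ℂ) * (z * convP bγ φt f) := by rw [hwt]; ring
    rw [e1]
    simp [Complex.add_im, Complex.mul_im]
  have hGH : (G * Gᴴ)ᴴ = G * Gᴴ := by
    rw [Matrix.conjTranspose_mul, Matrix.conjTranspose_conjTranspose]
  have hGH2 : (Gᴴ * G)ᴴ = Gᴴ * G := by
    rw [Matrix.conjTranspose_mul, Matrix.conjTranspose_conjTranspose]
  have ha1 : (-z * wt).im < 0 := by
    have e1 : -z * wt = -(z * wt) := by ring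
    rw [e1, Complex.neg_im]
    have : 0 < (z * wt).im := by
      rw [hzwt]
      nlinarith [mul_nonneg hσ.le hnn2]
    linarith
  have ha2 : (-z * w).im < 0 := by
    have e1 : -z * w = -(z * w) := by ring
    rw [e1, Complex.neg_im]
    have : 0 < (z * w).im := by
      rw [hzw]
      nlinarith [mul_nonneg hσ.le hnn1z]
    linarith
  have hb1 : (w⁻¹).im ≤ 0 := by
    rw [Complex.inv_im]
    apply div_nonpos_of_nonpos_of_nonneg
    · rw [hwim]
      nlinarith [mul_nonneg hσ.le hnn1]
    · exact Complex.normSq_nonneg w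
  have hb2 : (wt⁻¹).im ≤ 0 := by
    rw [Complex.inv_im]
    apply div_nonpos_of_nonpos_of_nonneg
    · rw [hwtim]
      nlinarith [mul_nonneg hσ.le hnn2']
    · exact Complex.normSq_nonneg wt
  have hdet1 : IsUnit (((-z * wt) • (1 : Matrix (Fin N) (Fin N) ℂ) + w⁻¹ • (G * Gᴴ)).det) := by
    have h := ImagPartsAux.isUnit_det_aux (-z * wt) w⁻¹ ha1 hb1 Gᴴ
    rwa [Matrix.conjTranspose_conjTranspose] at h
  have hdet2 : IsUnit (((-z * w) • (1 : Matrix (Fin T) (Fin T) ℂ) + wt⁻¹ • (Gᴴ * G)).det) :=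
    ImagPartsAux.isUnit_det_aux (-z * w) wt⁻¹ ha2 hb2 G
  have hkey1 := ImagPartsAux.trace_inv_im 1 (-z * wt) w⁻¹ (G * Gᴴ) hGH hdet1
  have hkey2 := ImagPartsAux.trace_inv_im z (-z * w) wt⁻¹ (Gᴴ * G) hGH2 hdet2
  rw [← hS] at hkey1
  rw [← hSt] at hkey2
  simp only [_root_.map_one, one_mul] at hkey1
  have hkey1' : S.trace.im
      = (z.im + σ2 * (z * convP bγ φt f).im) * ((S * Sᴴ).trace).re
        + (σ2 * (convM bγ φ f).im) / Complex.normSq w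
            * ((S * (G * Gᴴ) * Sᴴ).trace).re := by
    rw [hkey1]
    have h1 : (-z * wt).im = -(z * wt).im := by
      have : -z * wt = -(z * wt) := by ring
      rw [this, Complex.neg_im]
    rw [h1, Complex.inv_im, hzwt, hwim]
    ring
  have hc1z : (starRingEnd ℂ) z * (-z * w) = -((Complex.normSq z : ℂ) * w) := by
    rw [show ((Complex.normSq z : ℂ)) = z * (starRingEnd ℂ) z from (Complex.mul_conj z).symm]
    ring
  have hkey2' : (z * St.trace).im
      = Complex.normSq z * (σ2 * (convM bγ φ f).im) * ((St * Stᴴ).trace).re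
        + (z.im + σ2 * (z * convP bγ φt f).im) / Complex.normSq wt
            * ((St * (Gᴴ * G) * Stᴴ).trace).re := by
    rw [hkey2, hc1z, ImagPartsAux.conj_mul_inv_im]
    have h2 : (-((Complex.normSq z : ℂ) * w)).im = -(Complex.normSq z * w.im) := by
      simp [Complex.neg_im, Complex.mul_im]
    rw [h2, hwim, hzwt]
    ring
  have hTim : ∀ x : ℂ, ((T : ℂ)⁻¹ * x).im = (T : ℝ)⁻¹ * x.im := by
    intro x
    rw [show ((T : ℂ))⁻¹ = (((T : ℝ)⁻¹ : ℝ) : ℂ) by push_cast; ring]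
    simp [Complex.mul_im]
  have hint1 : IntervalIntegrable (fun u => bγ (u - f) * (φ u).im) MeasureTheory.volume 0 1 :=
    ImagPartsAux.aux_int_re _ hcont1 _ hφint.im
  have hint2 : IntervalIntegrable (fun u => bγ (f - u) * (z * φt u).im)
      MeasureTheory.volume 0 1 :=
    ImagPartsAux.aux_int_re _ hcont2 _ hφtz.im
  have hIcomb : ∀ c1 c2 : ℝ,
      (∫ u in (0:ℝ)..1, (c1 * (bγ (u - f) * (φ u).im) + c2 * (bγ (f - u) * (z * φt u).im)))
        = c1 * (convM bγ φ f).im + c2 * (z * convP bγ φt f).im := by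
    intro c1 c2
    rw [intervalIntegral.integral_add (hint1.const_mul c1) (hint2.const_mul c2),
      intervalIntegral.integral_const_mul, intervalIntegral.integral_const_mul, ← hI1, ← hI2]
  constructor
  · -- first equation
    rw [hfix1, hTim]
    have hEq : Set.EqOn
        (fun u => K11 N T L σ2 bγ A φ φt z f u * (φ u).im
          + K12 N T L σ2 bγ A φ φt z f u * (z * φt u).im)
        (fun u => (σ2 * ((T:ℝ)⁻¹ * ((S * (G * Gᴴ) * Sᴴ).trace).re / Complex.normSq w))
            * (bγ (u - f) * (φ u).im)
          + (σ2 * ((T:ℝ)⁻¹ * ((S * Sᴴ).trace).re)) * (bγ (f - u) * (z * φt u).im))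
        (Set.uIcc (0:ℝ) 1) := by
      intro u _
      simp only [K11, K12, zeta]
      rw [← hw, ← hSdef, ← hG, Complex.sq_norm]
      ring
    rw [intervalIntegral.integral_congr hEq, hIcomb, hkey1']
    simp only [F1]
    rw [← hSdef]
    ring
  · -- second equation
    rw [hfix2, show z * ((T : ℂ)⁻¹ * St.trace) = (T : ℂ)⁻¹ * (z * St.trace) by ring, hTim]
    have hEq : Set.EqOn
        (fun u => K21 N T L σ2 bγ A φ φt z f u * (φ u).im
          + K22 N T L σ2 bγ A φ φt z f u * (z * φt u).im)
        (fun u => (σ2 * (Complex.normSq z * ((T:ℝ)⁻¹ * ((St * Stᴴ).trace).re)))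
            * (bγ (u - f) * (φ u).im)
          + (σ2 * ((T:ℝ)⁻¹ * ((St * (Gᴴ * G) * Stᴴ).trace).re / Complex.normSq wt))
            * (bγ (f - u) * (z * φt u).im))
        (Set.uIcc (0:ℝ) 1) := by
      intro u _
      simp only [K21, K22, zetat]
      rw [← hwt, ← hStdef, ← hG, Complex.sq_norm, Complex.sq_norm]
      ring
    rw [intervalIntegral.integral_congr hEq, hIcomb, hkey2']
    simp only [F2]
    simp only [zetat]
    rw [← hStdef, ← hwt, ← hG, Complex.sq_norm]
    ring

end
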